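/- For every δ > 1/2 there exists a constant C, depending only on δ, c_φ, C_φ, τ, M and ∫x²φ(x)dx, such that for all n ≥ 1: E[ Σ_{l ≥ 1} Σ_{0 ≤ k < 2^l} 2^{−l} l^{−2δ} ∫_ℝ (θ − θ_{0,lk})² dπ_{lk}(θ | X_{lk}) ] ≤ C/n, where the expectation is over the independent standard normal variables ε_{lk}. -/

import Mathlib

open MeasureTheory ProbabilityTheory Real

set_option maxHeartbeats 1000000

/-- Posterior second moment `∫ (θ-θ₀)² dπ(θ|x)` for the prior with density `σ⁻¹φ(·/σ)`
in the Gaussian observation model `x | θ ~ N(θ, 1/n)`. -/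
noncomputable def postSecondMoment (φ : ℝ → ℝ) (n : ℕ) (σ θ₀ x : ℝ) : ℝ :=
  (∫ θ : ℝ, (θ - θ₀) ^ 2 * (Real.exp (-(n : ℝ) * (θ - x) ^ 2 / 2) * φ (θ / σ))) /
    (∫ θ : ℝ, Real.exp (-(n : ℝ) * (θ - x) ^ 2 / 2) * φ (θ / σ))

namespace ContractionAux

lemma texp_le {t : ℝ} : t * rexp (-t) ≤ 1 := by
  rcases le_or_gt t 0 with h | h
  · have := Real.exp_pos (-t); nlinarith
  · rw [Real.exp_neg, mul_inv_le_iff₀ (Real.exp_pos t)]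
    linarith [Real.add_one_le_exp t]

lemma sq_gauss_ptwise {b : ℝ} (hb : 0 < b) (u : ℝ) :
    u ^ 2 * rexp (-b * u ^ 2) ≤ (2 / b) * rexp (-(b / 2) * u ^ 2) := by
  have h1 : rexp (-b * u ^ 2) = rexp (-(b / 2) * u ^ 2) * rexp (-(b / 2) * u ^ 2) := by
    rw [← Real.exp_add]; ring_nf
  have h2 : u ^ 2 * rexp (-(b / 2) * u ^ 2) ≤ 2 / b := by
    have h3 : (b / 2 * u ^ 2) * rexp (-(b / 2 * u ^ 2)) ≤ 1 := texp_le
    calc u ^ 2 * rexp (-(b / 2) * u ^ 2)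
        = (2 / b) * ((b / 2 * u ^ 2) * rexp (-(b / 2 * u ^ 2))) := by
          field_simp
      _ ≤ (2 / b) * 1 := mul_le_mul_of_nonneg_left h3 (by positivity)
      _ = 2 / b := mul_one _
  calc u ^ 2 * rexp (-b * u ^ 2)
      = (u ^ 2 * rexp (-(b / 2) * u ^ 2)) * rexp (-(b / 2) * u ^ 2) := by rw [h1]; ring
    _ ≤ (2 / b) * rexp (-(b / 2) * u ^ 2) := mul_le_mul_of_nonneg_right h2 (Real.exp_pos _).le

lemma integrable_sq_gauss {b : ℝ} (hb : 0 < b) :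
    Integrable fun u : ℝ => u ^ 2 * rexp (-b * u ^ 2) := by
  apply Integrable.mono' ((integrable_exp_neg_mul_sq (half_pos hb)).const_mul (2 / b))
  · exact ((measurable_id.pow_const 2).mul
      ((measurable_id.pow_const 2).const_mul (-b)).exp).aestronglyMeasurable
  · refine Filter.Eventually.of_forall fun u => ?_
    rw [Real.norm_eq_abs, abs_of_nonneg (by positivity)]
    exact sq_gauss_ptwise hb u

lemma integral_sq_gauss_le {b : ℝ} (hb : 0 < b) :
    ∫ u : ℝ, u ^ 2 * rexp (-b * u ^ 2) ≤ (2 / b) * Real.sqrt (2 * π / b) := by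
  calc ∫ u : ℝ, u ^ 2 * rexp (-b * u ^ 2)
      ≤ ∫ u : ℝ, (2 / b) * rexp (-(b / 2) * u ^ 2) :=
        integral_mono (integrable_sq_gauss hb)
          ((integrable_exp_neg_mul_sq (half_pos hb)).const_mul _)
          (fun u => sq_gauss_ptwise hb u)
    _ = (2 / b) * Real.sqrt (π / (b / 2)) := by
        rw [integral_const_mul, integral_gaussian]
    _ = (2 / b) * Real.sqrt (2 * π / b) := by
        congr 1; congr 1; field_simp

lemma side_sq {a v e : ℝ} (ha : 0 < a) (hv1 : a ≤ v) (hv2 : v ≤ 2 * a) (he : 0 ≤ e) :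
    (v - e) ^ 2 ≤ 4 * a ^ 2 + max (e - a) 0 ^ 2 := by
  rcases le_or_gt e (2 * a) with h | h
  · have h1 : (v - e) ^ 2 ≤ (2 * a) ^ 2 := sq_le_sq' (by linarith) (by linarith)
    nlinarith [le_max_right (e - a) (0 : ℝ), sq_nonneg (max (e - a) 0)]
  · have hm : max (e - a) 0 = e - a := max_eq_left (by linarith)
    have h1 : (v - e) ^ 2 ≤ (e - a) ^ 2 := sq_le_sq' (by linarith) (by linarith)
    rw [hm]; nlinarith [sq_nonneg a]



variable {φ : ℝ → ℝ} {Cφ : ℝ}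

lemma exp_form (n : ℕ) (x θ : ℝ) :
    rexp (-(n : ℝ) * (θ - x) ^ 2 / 2) = rexp (-((n : ℝ) / 2) * (θ - x) ^ 2) := by
  ring_nf

lemma integrable_phi (hφ_prob : (∫ x : ℝ, φ x) = 1) : Integrable φ := by
  by_contra h
  rw [integral_undef h] at hφ_prob
  norm_num at hφ_prob

lemma integrable_denom (hφ_meas : Measurable φ) (hφ_nonneg : ∀ x, 0 ≤ φ x)
    (hub : ∀ x : ℝ, φ x ≤ Cφ) {n : ℕ} (hn : 1 ≤ n) (σ x : ℝ) :
    Integrable fun θ : ℝ => rexp (-(n : ℝ) * (θ - x) ^ 2 / 2) * φ (θ / σ) := by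
  have hb : (0 : ℝ) < (n : ℝ) / 2 := by positivity
  apply Integrable.mono' (((integrable_exp_neg_mul_sq hb).comp_sub_right x).const_mul Cφ)
  · have hm1 : Measurable fun θ : ℝ => rexp (-(n : ℝ) * (θ - x) ^ 2 / 2) := by fun_prop
    exact (hm1.mul (hφ_meas.comp (measurable_id.div_const σ))).aestronglyMeasurable
  · refine Filter.Eventually.of_forall fun θ => ?_
    rw [Real.norm_eq_abs, abs_of_nonneg (mul_nonneg (Real.exp_pos _).le (hφ_nonneg _))]
    rw [exp_form]
    calc rexp (-((n:ℝ)/2) * (θ - x) ^ 2) * φ (θ / σ)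
        ≤ rexp (-((n:ℝ)/2) * (θ - x) ^ 2) * Cφ :=
          mul_le_mul_of_nonneg_left (hub _) (Real.exp_pos _).le
      _ = Cφ * ((fun u => rexp (-((n:ℝ)/2) * u ^ 2)) (θ - x)) := by ring

lemma integrable_sqshift {n : ℕ} (hn : 1 ≤ n) (c x : ℝ) :
    Integrable fun θ : ℝ => (θ - c) ^ 2 * rexp (-((n : ℝ) / 2) * (θ - x) ^ 2) := by
  have hb : (0 : ℝ) < (n : ℝ) / 2 := by positivity
  have h1 : Integrable fun u : ℝ => (u + (x - c)) ^ 2 * rexp (-((n : ℝ) / 2) * u ^ 2) := by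
    have e1 : (fun u : ℝ => (u + (x - c)) ^ 2 * rexp (-((n : ℝ) / 2) * u ^ 2)) =
        fun u : ℝ => (u ^ 2 * rexp (-((n : ℝ) / 2) * u ^ 2)) +
          ((2 * (x - c)) * (u * rexp (-((n : ℝ) / 2) * u ^ 2)) +
            (x - c) ^ 2 * rexp (-((n : ℝ) / 2) * u ^ 2)) := by
      funext u; ring
    rw [e1]
    exact (integrable_sq_gauss hb).add
      (((integrable_mul_exp_neg_mul_sq hb).const_mul _).add
        ((integrable_exp_neg_mul_sq hb).const_mul _))
  have := h1.comp_sub_right x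
  convert this using 2 with θ
  ring_nf

lemma integrable_numer (hφ_meas : Measurable φ) (hφ_nonneg : ∀ x, 0 ≤ φ x)
    (hub : ∀ x : ℝ, φ x ≤ Cφ) {n : ℕ} (hn : 1 ≤ n) (σ θ₀ x : ℝ) :
    Integrable fun θ : ℝ => (θ - θ₀) ^ 2 * (rexp (-(n : ℝ) * (θ - x) ^ 2 / 2) * φ (θ / σ)) := by
  apply Integrable.mono' ((integrable_sqshift hn θ₀ x).const_mul Cφ)
  · have hm1 : Measurable fun θ : ℝ => (θ - θ₀) ^ 2 * rexp (-(n : ℝ) * (θ - x) ^ 2 / 2) := by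
      fun_prop
    have : (fun θ : ℝ => (θ - θ₀) ^ 2 * (rexp (-(n : ℝ) * (θ - x) ^ 2 / 2) * φ (θ / σ))) =
        fun θ : ℝ => ((θ - θ₀) ^ 2 * rexp (-(n : ℝ) * (θ - x) ^ 2 / 2)) * φ (θ / σ) := by
      funext θ; ring
    rw [this]
    exact (hm1.mul (hφ_meas.comp (measurable_id.div_const σ))).aestronglyMeasurable
  · refine Filter.Eventually.of_forall fun θ => ?_
    rw [Real.norm_eq_abs, abs_of_nonneg (mul_nonneg (sq_nonneg _)
      (mul_nonneg (Real.exp_pos _).le (hφ_nonneg _)))]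
    rw [exp_form]
    calc (θ - θ₀) ^ 2 * (rexp (-((n:ℝ)/2) * (θ - x) ^ 2) * φ (θ / σ))
        ≤ (θ - θ₀) ^ 2 * (rexp (-((n:ℝ)/2) * (θ - x) ^ 2) * Cφ) := by
          apply mul_le_mul_of_nonneg_left _ (sq_nonneg _)
          exact mul_le_mul_of_nonneg_left (hub _) (Real.exp_pos _).le
      _ = Cφ * ((θ - θ₀) ^ 2 * rexp (-((n:ℝ)/2) * (θ - x) ^ 2)) := by ring





lemma denom_lb (hφ_meas : Measurable φ) (hφ_nonneg : ∀ x, 0 ≤ φ x)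
    (hub : ∀ x : ℝ, φ x ≤ Cφ)
    {cφ τ M : ℝ} (hc : 0 < cφ) (hlb : ∀ x ∈ Set.Ioo (-τ) τ, cφ ≤ φ x)
    (hM : 0 < M) (hτ : M + 1 ≤ τ)
    {n : ℕ} (hn : 1 ≤ n) {σ θ₀ : ℝ} (hσ : 0 < σ) (hθ : |θ₀| ≤ M * σ) (ε : ℝ) :
    cφ * (min σ (1 / Real.sqrt n) / 4) *
      rexp (-(1/8) - max (|ε| - Real.sqrt n * min σ (1 / Real.sqrt n) / 4) 0 ^ 2 / 2)
      ≤ ∫ θ : ℝ, rexp (-(n : ℝ) * (θ - (θ₀ + ε / Real.sqrt n)) ^ 2 / 2) * φ (θ / σ) := by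
  have hn0 : (0:ℝ) < n := by exact_mod_cast hn
  set s := Real.sqrt n with hsdef
  have hs0 : 0 < s := Real.sqrt_pos.2 hn0
  have hsn : s ^ 2 = (n:ℝ) := Real.sq_sqrt (Nat.cast_nonneg n)
  set r := min σ (1/s) with hrdef
  have hr0 : 0 < r := lt_min hσ (by positivity)
  have hrσ : r ≤ σ := min_le_left _ _
  have hsr : s * r ≤ 1 := by
    have h1 : r ≤ 1/s := min_le_right _ _
    calc s * r ≤ s * (1/s) := by nlinarith
      _ = 1 := by field_simp
  set a := s * r / 4 with hadef
  have ha0 : 0 < a := by positivity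
  have ha4 : a ≤ 1/4 := by rw [hadef]; linarith
  set x := θ₀ + ε / s with hxdef
  set m := max (|ε| - a) 0 with hmdef
  have hm0 : 0 ≤ m := le_max_right _ _
  set p := if 0 ≤ ε then θ₀ + r/4 else θ₀ - r/2 with hpdef
  have key : ∀ θ ∈ Set.Icc p (p + r/4), (n:ℝ) * (θ - x)^2 ≤ 1/4 + m^2 := by
    intro θ hθmem
    obtain ⟨hθ1, hθ2⟩ := hθmem
    have h1 : (n:ℝ) * (θ - x)^2 = (s*(θ-θ₀) - ε)^2 := by
      rw [← hsn, hxdef]; field_simp; ring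
    rw [h1]
    have hbound : (s*(θ-θ₀) - ε)^2 ≤ 4*a^2 + m^2 := by
      by_cases hε : 0 ≤ ε
      · rw [if_pos hε] at hpdef
        have h2 : a ≤ s*(θ-θ₀) := by rw [hadef]; rw [hpdef] at hθ1; nlinarith
        have h3 : s*(θ-θ₀) ≤ 2*a := by rw [hadef]; rw [hpdef] at hθ2; nlinarith
        have h4 := side_sq ha0 h2 h3 hε
        rwa [hmdef, abs_of_nonneg hε]
      · push_neg at hε
        rw [if_neg (not_le.2 hε)] at hpdef
        have h2 : a ≤ s*(θ₀-θ) := by rw [hadef]; rw [hpdef] at hθ2; nlinarith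
        have h3 : s*(θ₀-θ) ≤ 2*a := by rw [hadef]; rw [hpdef] at hθ1; nlinarith
        have h4 := side_sq ha0 h2 h3 (neg_nonneg.2 hε.le)
        have h5 : (s*(θ-θ₀) - ε)^2 = (s*(θ₀-θ) - (-ε))^2 := by ring
        rw [h5, hmdef, abs_of_neg hε]
        exact h4
    have h6 : 4*a^2 ≤ 1/4 := by nlinarith
    linarith
  have hsub : ∀ θ ∈ Set.Icc p (p + r/4), θ/σ ∈ Set.Ioo (-τ) τ := by
    intro θ hθmem
    obtain ⟨hθ1, hθ2⟩ := hθmem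
    have hd : |θ - θ₀| ≤ r/2 := by
      by_cases hε : 0 ≤ ε
      · rw [if_pos hε] at hpdef; rw [hpdef] at hθ1 hθ2
        rw [abs_le]; constructor <;> linarith
      · rw [if_neg hε] at hpdef; rw [hpdef] at hθ1 hθ2
        rw [abs_le]; constructor <;> linarith
    have habs : |θ| ≤ M*σ + σ/2 := by
      have : |θ| ≤ |θ₀| + |θ - θ₀| := by
        calc |θ| = |θ₀ + (θ - θ₀)| := by ring_nf
          _ ≤ |θ₀| + |θ - θ₀| := abs_add_le _ _
      linarith [abs_le.1 hd, this, hθ]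
    have hθσ : |θ/σ| < τ := by
      rw [abs_div, abs_of_pos hσ]
      rw [div_lt_iff₀ hσ]
      have : τ * σ ≥ (M+1) * σ := by nlinarith
      nlinarith
    exact abs_lt.1 hθσ
  have hintD := integrable_denom hφ_meas hφ_nonneg hub hn σ x
  have hpq : p ≤ p + r/4 := by linarith
  have step1 : ∫ _θ in Set.Icc p (p + r/4), (cφ * rexp (-(1/8) - m^2/2))
      ≤ ∫ θ in Set.Icc p (p + r/4), rexp (-(n:ℝ)*(θ-x)^2/2) * φ (θ/σ) := by
    apply setIntegral_mono_on
      (integrableOn_const measure_Icc_lt_top.ne) hintD.integrableOn measurableSet_Icc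
    intro θ hθmem
    have hφl : cφ ≤ φ (θ/σ) := hlb _ (hsub θ hθmem)
    have hexp : rexp (-(1/8) - m^2/2) ≤ rexp (-(n:ℝ)*(θ-x)^2/2) := by
      apply Real.exp_le_exp.2
      have := key θ hθmem
      linarith
    calc cφ * rexp (-(1/8) - m^2/2) ≤ φ (θ/σ) * rexp (-(n:ℝ)*(θ-x)^2/2) :=
          mul_le_mul hφl hexp (Real.exp_pos _).le (le_trans hc.le hφl)
      _ = rexp (-(n:ℝ)*(θ-x)^2/2) * φ (θ/σ) := mul_comm _ _
  have step0 : ∫ _θ in Set.Icc p (p + r/4), (cφ * rexp (-(1/8) - m^2/2))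
      = (r/4) * (cφ * rexp (-(1/8) - m^2/2)) := by
    rw [setIntegral_const, measureReal_def, Real.volume_Icc, smul_eq_mul]
    congr 1
    rw [show p + r/4 - p = r/4 by ring]
    exact ENNReal.toReal_ofReal (by positivity)
  have step2 : ∫ θ in Set.Icc p (p + r/4), rexp (-(n:ℝ)*(θ-x)^2/2) * φ (θ/σ)
      ≤ ∫ θ : ℝ, rexp (-(n:ℝ)*(θ-x)^2/2) * φ (θ/σ) :=
    setIntegral_le_integral hintD
      (Filter.Eventually.of_forall fun θ => mul_nonneg (Real.exp_pos _).le (hφ_nonneg _))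
  rw [step0] at step1
  calc cφ * (r/4) * rexp (-(1/8) - m^2/2) = (r/4) * (cφ * rexp (-(1/8) - m^2/2)) := by ring
    _ ≤ _ := le_trans step1 step2


lemma integrable_sqshift' {b : ℝ} (hb : 0 < b) (c x : ℝ) :
    Integrable fun θ : ℝ => (θ - c) ^ 2 * rexp (-b * (θ - x) ^ 2) := by
  have h1 : Integrable fun u : ℝ => (u + (x - c)) ^ 2 * rexp (-b * u ^ 2) := by
    have e1 : (fun u : ℝ => (u + (x - c)) ^ 2 * rexp (-b * u ^ 2)) =
        fun u : ℝ => (u ^ 2 * rexp (-b * u ^ 2)) +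
          ((2 * (x - c)) * (u * rexp (-b * u ^ 2)) + (x - c) ^ 2 * rexp (-b * u ^ 2)) := by
      funext u; ring
    rw [e1]
    exact (integrable_sq_gauss hb).add
      (((integrable_mul_exp_neg_mul_sq hb).const_mul _).add
        ((integrable_exp_neg_mul_sq hb).const_mul _))
  have h2 := h1.comp_sub_right x
  convert h2 using 2 with θ
  ring_nf

lemma integral_sqshift_le {b : ℝ} (hb : 0 < b) (c x : ℝ) :
    ∫ θ : ℝ, (θ - c) ^ 2 * rexp (-b * (θ - x) ^ 2)
      ≤ (4 / b) * Real.sqrt (2 * π / b) + 2 * (x - c) ^ 2 * Real.sqrt (π / b) := by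
  have e1 : (fun θ : ℝ => (θ - c) ^ 2 * rexp (-b * (θ - x) ^ 2)) =
      fun θ : ℝ => (fun u : ℝ => (u + (x - c)) ^ 2 * rexp (-b * u ^ 2)) (θ - x) := by
    funext θ; ring_nf
  rw [e1, integral_sub_right_eq_self (fun u : ℝ => (u + (x - c)) ^ 2 * rexp (-b * u ^ 2)) x]
  have h1 : Integrable fun u : ℝ => (u + (x - c)) ^ 2 * rexp (-b * u ^ 2) := by
    have := integrable_sqshift' hb (-(x - c)) 0
    convert this using 2 with u
    ring_nf
  have h2 : Integrable fun u : ℝ =>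
      2 * (u ^ 2 * rexp (-b * u ^ 2)) + (2 * (x - c) ^ 2) * rexp (-b * u ^ 2) :=
    ((integrable_sq_gauss hb).const_mul 2).add ((integrable_exp_neg_mul_sq hb).const_mul _)
  calc ∫ u : ℝ, (u + (x - c)) ^ 2 * rexp (-b * u ^ 2)
      ≤ ∫ u : ℝ, (2 * (u ^ 2 * rexp (-b * u ^ 2)) + (2 * (x - c) ^ 2) * rexp (-b * u ^ 2)) := by
        apply integral_mono h1 h2
        intro u
        dsimp only
        have hp : (u + (x - c)) ^ 2 ≤ 2 * u ^ 2 + 2 * (x - c) ^ 2 := by nlinarith [sq_nonneg (u - (x - c))]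
        have he := (Real.exp_pos (-b * u ^ 2)).le
        nlinarith [mul_le_mul_of_nonneg_right hp he]
    _ = 2 * (∫ u : ℝ, u ^ 2 * rexp (-b * u ^ 2)) + (2 * (x - c) ^ 2) * ∫ u : ℝ, rexp (-b * u ^ 2) := by
        rw [integral_add (((integrable_sq_gauss hb).const_mul 2)) ((integrable_exp_neg_mul_sq hb).const_mul _),
          integral_const_mul, integral_const_mul]
    _ ≤ 2 * ((2 / b) * Real.sqrt (2 * π / b)) + (2 * (x - c) ^ 2) * Real.sqrt (π / b) := by
        rw [integral_gaussian]
        have := integral_sq_gauss_le hb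
        nlinarith [sq_nonneg (x - c)]
    _ = (4 / b) * Real.sqrt (2 * π / b) + 2 * (x - c) ^ 2 * Real.sqrt (π / b) := by ring

lemma numer_ub1 (hφ_meas : Measurable φ) (hφ_nonneg : ∀ x, 0 ≤ φ x)
    (hub : ∀ x : ℝ, φ x ≤ Cφ) (hCφ : 0 ≤ Cφ) {n : ℕ} (hn : 1 ≤ n) (σ θ₀ x : ℝ) :
    ∫ θ : ℝ, (θ - θ₀) ^ 2 * (rexp (-(n : ℝ) * (θ - x) ^ 2 / 2) * φ (θ / σ))
      ≤ Cφ * ((8 / (n:ℝ)) * Real.sqrt (4 * π / (n:ℝ)) + 2 * (x - θ₀) ^ 2 * Real.sqrt (2 * π / (n:ℝ))) := by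
  have hb : (0:ℝ) < (n:ℝ)/2 := by positivity
  have step1 : ∫ θ : ℝ, (θ - θ₀) ^ 2 * (rexp (-(n : ℝ) * (θ - x) ^ 2 / 2) * φ (θ / σ))
      ≤ ∫ θ : ℝ, Cφ * ((θ - θ₀) ^ 2 * rexp (-((n:ℝ)/2) * (θ - x) ^ 2)) := by
    apply integral_mono (integrable_numer hφ_meas hφ_nonneg hub hn σ θ₀ x)
      ((integrable_sqshift' hb θ₀ x).const_mul Cφ)
    intro θ
    dsimp only
    have e1 : -(n : ℝ) * (θ - x) ^ 2 / 2 = -((n:ℝ)/2) * (θ - x) ^ 2 := by ring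
    rw [e1]
    have h2 : rexp (-((n:ℝ)/2) * (θ - x) ^ 2) * φ (θ / σ)
        ≤ rexp (-((n:ℝ)/2) * (θ - x) ^ 2) * Cφ :=
      mul_le_mul_of_nonneg_left (hub _) (Real.exp_pos _).le
    calc (θ - θ₀) ^ 2 * (rexp (-((n:ℝ)/2) * (θ - x) ^ 2) * φ (θ / σ))
        ≤ (θ - θ₀) ^ 2 * (rexp (-((n:ℝ)/2) * (θ - x) ^ 2) * Cφ) :=
          mul_le_mul_of_nonneg_left h2 (sq_nonneg _)
      _ = Cφ * ((θ - θ₀) ^ 2 * rexp (-((n:ℝ)/2) * (θ - x) ^ 2)) := by ring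
  rw [integral_const_mul] at step1
  have step2 := integral_sqshift_le hb θ₀ x
  have e2 : (2:ℝ) * π / ((n:ℝ)/2) = 4 * π / (n:ℝ) := by field_simp; ring
  have e3 : π / ((n:ℝ)/2) = 2 * π / (n:ℝ) := by field_simp
  have e4 : (4:ℝ) / ((n:ℝ)/2) = 8 / (n:ℝ) := by field_simp; ring
  rw [e2, e3, e4] at step2
  calc ∫ θ : ℝ, (θ - θ₀) ^ 2 * (rexp (-(n : ℝ) * (θ - x) ^ 2 / 2) * φ (θ / σ))
      ≤ Cφ * ∫ θ : ℝ, (θ - θ₀) ^ 2 * rexp (-((n:ℝ)/2) * (θ - x) ^ 2) := step1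
    _ ≤ _ := mul_le_mul_of_nonneg_left step2 hCφ

lemma numer_ub2 (hφ_meas : Measurable φ) (hφ_nonneg : ∀ x, 0 ≤ φ x)
    (hφ_prob : (∫ x : ℝ, φ x) = 1) (hφ_int : Integrable φ)
    (hub : ∀ x : ℝ, φ x ≤ Cφ) (hmom : Integrable (fun x : ℝ => x ^ 2 * φ x))
    {M : ℝ} {n : ℕ} (hn : 1 ≤ n) {σ θ₀ : ℝ} (hσ : 0 < σ) (hθ : |θ₀| ≤ M * σ) (x : ℝ) :
    ∫ θ : ℝ, (θ - θ₀) ^ 2 * (rexp (-(n : ℝ) * (θ - x) ^ 2 / 2) * φ (θ / σ))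
      ≤ 2 * σ^3 * ((∫ u : ℝ, u ^ 2 * φ u) + M ^ 2) := by
  have hσ0 : σ ≠ 0 := ne_of_gt hσ
  have hint_g : Integrable (fun u : ℝ => (σ * u - θ₀) ^ 2 * φ u) := by
    apply Integrable.mono' ((hmom.const_mul (2 * σ ^ 2)).add (hφ_int.const_mul (2 * θ₀ ^ 2)))
    · exact ((((measurable_const.mul measurable_id).sub_const θ₀).pow_const 2).mul hφ_meas).aestronglyMeasurable
    · refine Filter.Eventually.of_forall fun u => ?_
      rw [Real.norm_eq_abs, abs_of_nonneg (mul_nonneg (sq_nonneg _) (hφ_nonneg _))]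
      have h1 : (σ * u - θ₀) ^ 2 ≤ 2 * σ ^ 2 * u ^ 2 + 2 * θ₀ ^ 2 := by nlinarith [sq_nonneg (σ * u + θ₀)]
      have := hφ_nonneg u
      dsimp only [Pi.add_apply]
      nlinarith [mul_le_mul_of_nonneg_right h1 (hφ_nonneg u)]
  have hcomp : Integrable (fun θ : ℝ => (θ - θ₀) ^ 2 * φ (θ / σ)) := by
    have h2 := hint_g.comp_div hσ0
    have e1 : (fun θ : ℝ => (σ * (θ / σ) - θ₀) ^ 2 * φ (θ / σ)) =
        fun θ : ℝ => (θ - θ₀) ^ 2 * φ (θ / σ) := by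
      funext θ; rw [mul_div_cancel₀ _ hσ0]
    rwa [e1] at h2
  have step1 : ∫ θ : ℝ, (θ - θ₀) ^ 2 * (rexp (-(n : ℝ) * (θ - x) ^ 2 / 2) * φ (θ / σ))
      ≤ ∫ θ : ℝ, (θ - θ₀) ^ 2 * φ (θ / σ) := by
    apply integral_mono (integrable_numer hφ_meas hφ_nonneg hub hn σ θ₀ x) hcomp
    intro θ
    dsimp only
    have h1 : rexp (-(n : ℝ) * (θ - x) ^ 2 / 2) ≤ 1 := by
      apply Real.exp_le_one_iff.2
      have : (0:ℝ) ≤ (n : ℝ) * (θ - x) ^ 2 := by positivity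
      linarith
    have h2 := hφ_nonneg (θ / σ)
    nlinarith [sq_nonneg (θ - θ₀), mul_le_mul_of_nonneg_right h1 h2, sq_nonneg ((θ - θ₀) * (θ/σ))]
  have step2 : ∫ θ : ℝ, (θ - θ₀) ^ 2 * φ (θ / σ) = σ * ∫ u : ℝ, (σ * u - θ₀) ^ 2 * φ u := by
    have h3 := MeasureTheory.Measure.integral_comp_div (fun u : ℝ => (σ * u - θ₀) ^ 2 * φ u) σ
    have e1 : (fun θ : ℝ => (σ * (θ / σ) - θ₀) ^ 2 * φ (θ / σ)) =
        fun θ : ℝ => (θ - θ₀) ^ 2 * φ (θ / σ) := by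
      funext θ; rw [mul_div_cancel₀ _ hσ0]
    rw [← e1]
    rw [show (∫ θ : ℝ, (σ * (θ / σ) - θ₀) ^ 2 * φ (θ / σ)) = ∫ θ : ℝ, (fun u : ℝ => (σ * u - θ₀) ^ 2 * φ u) (θ / σ) from rfl]
    rw [h3, abs_of_pos hσ, smul_eq_mul]
  have step3 : ∫ u : ℝ, (σ * u - θ₀) ^ 2 * φ u ≤ 2 * σ ^ 2 * (∫ u : ℝ, u ^ 2 * φ u) + 2 * θ₀ ^ 2 := by
    calc ∫ u : ℝ, (σ * u - θ₀) ^ 2 * φ u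
        ≤ ∫ u : ℝ, (2 * σ ^ 2 * (u ^ 2 * φ u) + 2 * θ₀ ^ 2 * φ u) := by
          apply integral_mono hint_g ((hmom.const_mul (2 * σ ^ 2)).add (hφ_int.const_mul (2 * θ₀ ^ 2)))
          intro u
          dsimp only [Pi.add_apply]
          have h1 : (σ * u - θ₀) ^ 2 ≤ 2 * σ ^ 2 * u ^ 2 + 2 * θ₀ ^ 2 := by nlinarith [sq_nonneg (σ * u + θ₀)]
          nlinarith [mul_le_mul_of_nonneg_right h1 (hφ_nonneg u)]
      _ = 2 * σ ^ 2 * (∫ u : ℝ, u ^ 2 * φ u) + 2 * θ₀ ^ 2 := by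
          rw [integral_add (hmom.const_mul _) (hφ_int.const_mul _), integral_const_mul,
            integral_const_mul, hφ_prob, mul_one]
  have hm2 : 0 ≤ ∫ u : ℝ, u ^ 2 * φ u :=
    integral_nonneg fun u => mul_nonneg (sq_nonneg _) (hφ_nonneg u)
  have hθ2 : θ₀ ^ 2 ≤ M ^ 2 * σ ^ 2 := by
    have := sq_abs θ₀
    nlinarith [abs_nonneg θ₀, sq_nonneg (M * σ)]
  calc ∫ θ : ℝ, (θ - θ₀) ^ 2 * (rexp (-(n : ℝ) * (θ - x) ^ 2 / 2) * φ (θ / σ))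
      ≤ σ * ∫ u : ℝ, (σ * u - θ₀) ^ 2 * φ u := by rw [← step2]; exact step1
    _ ≤ σ * (2 * σ ^ 2 * (∫ u : ℝ, u ^ 2 * φ u) + 2 * θ₀ ^ 2) := by nlinarith
    _ ≤ 2 * σ^3 * ((∫ u : ℝ, u ^ 2 * φ u) + M ^ 2) := by nlinarith



lemma pow_le_exp_fac (t : ℝ) (ht : 0 ≤ t) (k : ℕ) : t ^ k / (Nat.factorial k) ≤ rexp t := by
  calc t ^ k / (Nat.factorial k)
      ≤ ∑ i ∈ Finset.range (k + 1), t ^ i / (Nat.factorial i) := by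
        apply Finset.single_le_sum (f := fun i => t ^ i / (Nat.factorial i))
          (fun i _ => by positivity) (Finset.self_mem_range_succ k)
    _ ≤ rexp t := Real.sum_le_exp_of_nonneg ht _

lemma exp_small_le_three {u : ℝ} (hu : u ≤ 1) : rexp u ≤ 3 :=
  le_trans (Real.exp_le_exp.2 hu) (le_trans Real.exp_one_lt_d9.le (by norm_num))

lemma one_le_sqrt_two_pi : (1:ℝ) ≤ Real.sqrt (2 * π) := by
  rw [show (1:ℝ) = Real.sqrt 1 from (Real.sqrt_one).symm]
  exact Real.sqrt_le_sqrt (by nlinarith [Real.pi_gt_three])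

/-- generic: lintegral over gaussian of ofReal g bounded via dominating h of g·pdf -/
lemma lint_gauss_le {g h : ℝ → ℝ} (hg : Measurable g) (hgnn : ∀ x, 0 ≤ g x)
    (hh : Integrable h)
    (hpt : ∀ x, g x * gaussianPDFReal 0 1 x ≤ h x) :
    ∫⁻ x, ENNReal.ofReal (g x) ∂(gaussianReal 0 1) ≤ ENNReal.ofReal (∫ x, h x) := by
  rw [gaussianReal_of_var_ne_zero _ one_ne_zero,
    lintegral_withDensity_eq_lintegral_mul _ (measurable_gaussianPDF _ _) hg.ennreal_ofReal]
  have h1 : ∀ x : ℝ, (gaussianPDF 0 1 * fun x => ENNReal.ofReal (g x)) x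
      = ENNReal.ofReal (g x * gaussianPDFReal 0 1 x) := by
    intro x
    simp only [Pi.mul_apply, gaussianPDF]
    rw [← ENNReal.ofReal_mul (gaussianPDFReal_nonneg _ _ _), mul_comm]
  calc ∫⁻ x, (gaussianPDF 0 1 * fun x => ENNReal.ofReal (g x)) x
      = ∫⁻ x, ENNReal.ofReal (g x * gaussianPDFReal 0 1 x) := by
        congr 1; funext x; exact h1 x
    _ ≤ ∫⁻ x, ENNReal.ofReal (h x) := lintegral_mono fun x => ENNReal.ofReal_le_ofReal (hpt x)
    _ = ENNReal.ofReal (∫ x, h x) := by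
        rw [← ofReal_integral_eq_lintegral_ofReal hh]
        exact Filter.Eventually.of_forall fun x =>
          le_trans (mul_nonneg (hgnn x) (gaussianPDFReal_nonneg _ _ _)) (hpt x)

lemma exp_neg_abs_le (y : ℝ) : rexp (-|y|) ≤ 3 * (1 + y ^ 2)⁻¹ := by
  have h1 : 1 + y ^ 2 ≤ 3 * rexp |y| := by
    have h2 : |y| ^ 2 / 2 ≤ rexp |y| := by
      have := pow_le_exp_fac |y| (abs_nonneg y) 2
      norm_num at this ⊢
      linarith
    have h3 : (1:ℝ) ≤ rexp |y| := Real.one_le_exp (abs_nonneg y)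
    rw [sq_abs] at h2
    nlinarith
  rw [Real.exp_neg, inv_le_iff_one_le_mul₀ (Real.exp_pos _)]
  have hy : (0:ℝ) < 1 + y ^ 2 := by positivity
  calc (1:ℝ) = (1 + y ^ 2) * (1 + y ^ 2)⁻¹ := (mul_inv_cancel₀ hy.ne').symm
    _ ≤ (3 * rexp |y|) * (1 + y ^ 2)⁻¹ := mul_le_mul_of_nonneg_right h1 (by positivity)
    _ = 3 * (1 + y ^ 2)⁻¹ * rexp |y| := by ring

lemma integrable_exp_neg_abs : Integrable fun y : ℝ => rexp (-|y|) := by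
  apply Integrable.mono' (integrable_inv_one_add_sq.const_mul 3)
  · exact (measurable_abs.neg.exp).aestronglyMeasurable
  · exact Filter.Eventually.of_forall fun y => by
      rw [Real.norm_eq_abs, abs_of_nonneg (Real.exp_pos _).le]; exact exp_neg_abs_le y

lemma integral_exp_neg_abs_le : ∫ y : ℝ, rexp (-|y|) ≤ 3 * π := by
  calc ∫ y : ℝ, rexp (-|y|) ≤ ∫ y : ℝ, 3 * (1 + y ^ 2)⁻¹ :=
        integral_mono integrable_exp_neg_abs (integrable_inv_one_add_sq.const_mul 3)
          fun y => exp_neg_abs_le y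
    _ = 3 * π := by rw [integral_const_mul, integral_univ_inv_one_add_sq]



lemma max_sq_le (u : ℝ) : max u 0 ^ 2 ≤ u ^ 2 := by
  rcases le_total u 0 with h | h
  · rw [max_eq_right h]; simpa using sq_nonneg u
  · rw [max_eq_left h]

lemma pdf_eq (x : ℝ) : gaussianPDFReal 0 1 x = (Real.sqrt (2 * π))⁻¹ * rexp (-x ^ 2 / 2) := by
  simp [gaussianPDFReal]

lemma key_exp {a : ℝ} (ha0 : 0 < a) (ha : a ≤ 1/4) (x : ℝ) :
    rexp (max (|x| - a) 0 ^ 2 / 2) * gaussianPDFReal 0 1 x ≤ 3 * rexp (-(a * |x|)) := by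
  rw [pdf_eq]
  have h0 : (Real.sqrt (2 * π))⁻¹ ≤ 1 := by
    rw [← inv_one]
    exact inv_anti₀ one_pos one_le_sqrt_two_pi
  have h1 : max (|x| - a) 0 ^ 2 / 2 + (-x ^ 2 / 2) ≤ a ^ 2 / 2 + (-(a * |x|)) := by
    have h2 := max_sq_le (|x| - a)
    have h3 : (|x| - a) ^ 2 = x ^ 2 - 2 * a * |x| + a ^ 2 := by
      rw [sub_sq, sq_abs]; ring
    nlinarith
  have h4 : rexp (a ^ 2 / 2) ≤ 3 := exp_small_le_three (by nlinarith)
  calc rexp (max (|x| - a) 0 ^ 2 / 2) * ((Real.sqrt (2 * π))⁻¹ * rexp (-x ^ 2 / 2))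
      ≤ rexp (max (|x| - a) 0 ^ 2 / 2) * (1 * rexp (-x ^ 2 / 2)) := by
        apply mul_le_mul_of_nonneg_left _ (Real.exp_pos _).le
        exact mul_le_mul_of_nonneg_right h0 (Real.exp_pos _).le
    _ = rexp (max (|x| - a) 0 ^ 2 / 2 + (-x ^ 2 / 2)) := by rw [one_mul, ← Real.exp_add]
    _ ≤ rexp (a ^ 2 / 2 + (-(a * |x|))) := Real.exp_le_exp.2 h1
    _ = rexp (a ^ 2 / 2) * rexp (-(a * |x|)) := Real.exp_add _ _
    _ ≤ 3 * rexp (-(a * |x|)) := mul_le_mul_of_nonneg_right h4 (Real.exp_pos _).le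

lemma integrable_exp_neg_mul_abs {a : ℝ} (ha0 : 0 < a) :
    Integrable fun x : ℝ => rexp (-(a * |x|)) := by
  have h1 : (fun x : ℝ => rexp (-(a * |x|))) = fun x : ℝ => (fun y : ℝ => rexp (-|y|)) (a * x) := by
    funext x; dsimp only; rw [abs_mul, abs_of_pos ha0]
  rw [h1]
  exact integrable_exp_neg_abs.comp_mul_left' (ne_of_gt ha0)

lemma integral_exp_neg_mul_abs_le {a : ℝ} (ha0 : 0 < a) :
    ∫ x : ℝ, rexp (-(a * |x|)) ≤ 3 * π / a := by
  have h1 : (fun x : ℝ => rexp (-(a * |x|))) = fun x : ℝ => (fun y : ℝ => rexp (-|y|)) (a * x) := by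
    funext x; dsimp only; rw [abs_mul, abs_of_pos ha0]
  rw [h1, MeasureTheory.Measure.integral_comp_mul_left (fun y : ℝ => rexp (-|y|)) a,
    smul_eq_mul, abs_inv, abs_of_pos ha0]
  rw [div_eq_mul_inv, mul_comm (3 * π) a⁻¹]
  exact mul_le_mul_of_nonneg_left integral_exp_neg_abs_le (by positivity)

lemma gauss_B {a : ℝ} (ha0 : 0 < a) (ha : a ≤ 1/4) :
    ∫⁻ x, ENNReal.ofReal (rexp (max (|x| - a) 0 ^ 2 / 2)) ∂(gaussianReal 0 1)
      ≤ ENNReal.ofReal (9 * π / a) := by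
  have hmeas : Measurable fun x : ℝ => rexp (max (|x| - a) 0 ^ 2 / 2) := by fun_prop
  calc ∫⁻ x, ENNReal.ofReal (rexp (max (|x| - a) 0 ^ 2 / 2)) ∂(gaussianReal 0 1)
      ≤ ENNReal.ofReal (∫ x : ℝ, 3 * rexp (-(a * |x|))) :=
        lint_gauss_le hmeas (fun x => (Real.exp_pos _).le)
          ((integrable_exp_neg_mul_abs ha0).const_mul 3) (key_exp ha0 ha)
    _ ≤ ENNReal.ofReal (9 * π / a) := by
        apply ENNReal.ofReal_le_ofReal
        rw [integral_const_mul]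
        have := integral_exp_neg_mul_abs_le ha0
        calc 3 * ∫ x : ℝ, rexp (-(a * |x|)) ≤ 3 * (3 * π / a) := by linarith
          _ = 9 * π / a := by ring

lemma poly_le (x : ℝ) : 3 * ((1 + x ^ 2) * rexp (-((1:ℝ)/4 * |x|))) ≤ 19200 * (1 + x ^ 2)⁻¹ := by
  have hy : (0:ℝ) < 1 + x ^ 2 := by positivity
  have key : (1 + x ^ 2) ^ 2 ≤ 6400 * rexp ((1:ℝ)/4 * |x|) := by
    set t := |x| / 4 with htdef
    have ht : 0 ≤ t := by positivity
    have hx2 : x ^ 2 = 16 * t ^ 2 := by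
      rw [htdef, ← sq_abs]; ring
    have he : (1:ℝ)/4 * |x| = t := by rw [htdef]; ring
    rw [he, hx2]
    have h2 := pow_le_exp_fac t ht 2
    have h4 := pow_le_exp_fac t ht 4
    have h0 : (1:ℝ) ≤ rexp t := Real.one_le_exp ht
    norm_num [Nat.factorial] at h2 h4
    nlinarith [sq_nonneg t, pow_nonneg ht 4]
  have hcancel : rexp ((1:ℝ)/4 * |x|) * rexp (-((1:ℝ)/4 * |x|)) = 1 := by
    rw [← Real.exp_add]; simp
  rw [show (19200:ℝ) * (1 + x ^ 2)⁻¹ = (19200 / (1 + x ^ 2)) by ring, le_div_iff₀ hy]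
  have hm := mul_le_mul_of_nonneg_right key (Real.exp_pos (-((1:ℝ)/4 * |x|))).le
  nlinarith [Real.exp_pos (-((1:ℝ)/4 * |x|))]



lemma gauss_A :
    ∫⁻ x, ENNReal.ofReal ((1 + x ^ 2) * rexp (max (|x| - 1/4) 0 ^ 2 / 2)) ∂(gaussianReal 0 1)
      ≤ ENNReal.ofReal (19200 * π) := by
  have hmeas : Measurable fun x : ℝ => (1 + x ^ 2) * rexp (max (|x| - 1/4) 0 ^ 2 / 2) := by
    fun_prop
  have hnn : ∀ x : ℝ, 0 ≤ (1 + x ^ 2) * rexp (max (|x| - 1/4) 0 ^ 2 / 2) := fun x =>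
    mul_nonneg (by positivity) (Real.exp_pos _).le
  have hpt : ∀ x : ℝ, ((1 + x ^ 2) * rexp (max (|x| - 1/4) 0 ^ 2 / 2)) * gaussianPDFReal 0 1 x
      ≤ 19200 * (1 + x ^ 2)⁻¹ := by
    intro x
    have h1 := key_exp (a := 1/4) (by norm_num) (le_refl _) x
    have h2 : (0:ℝ) ≤ 1 + x ^ 2 := by positivity
    calc ((1 + x ^ 2) * rexp (max (|x| - 1/4) 0 ^ 2 / 2)) * gaussianPDFReal 0 1 x
        = (1 + x ^ 2) * (rexp (max (|x| - 1/4) 0 ^ 2 / 2) * gaussianPDFReal 0 1 x) := by ring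
      _ ≤ (1 + x ^ 2) * (3 * rexp (-(1/4 * |x|))) := mul_le_mul_of_nonneg_left h1 h2
      _ = 3 * ((1 + x ^ 2) * rexp (-((1:ℝ)/4 * |x|))) := by ring
      _ ≤ 19200 * (1 + x ^ 2)⁻¹ := poly_le x
  calc ∫⁻ x, ENNReal.ofReal ((1 + x ^ 2) * rexp (max (|x| - 1/4) 0 ^ 2 / 2)) ∂(gaussianReal 0 1)
      ≤ ENNReal.ofReal (∫ x : ℝ, 19200 * (1 + x ^ 2)⁻¹) :=
        lint_gauss_le hmeas hnn (integrable_inv_one_add_sq.const_mul 19200) hpt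
    _ = ENNReal.ofReal (19200 * π) := by
        rw [integral_const_mul, integral_univ_inv_one_add_sq]

end ContractionAux

namespace ContractionAux
variable {φ : ℝ → ℝ} {Cφ : ℝ}
lemma ratio_helper {N D q c E : ℝ} (hD : c * E⁻¹ ≤ D) (hc : 0 < c) (hE : 0 < E)
    (hN : N ≤ q) (hq : 0 ≤ q) : N / D ≤ q * E / c := by
  have hcE : 0 < c * E⁻¹ := by positivity
  have h1 : N / D ≤ q / (c * E⁻¹) := div_le_div₀ hq hN hcE hD
  have h2 : q / (c * E⁻¹) = q * E / c := by field_simp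
  linarith

lemma exp_collapse (u : ℝ) : rexp (-(1/8) - u) = rexp (-(1/8)) * (rexp u)⁻¹ := by
  rw [← Real.exp_neg, ← Real.exp_add]; ring_nf

lemma post_le_A (hφ_meas : Measurable φ) (hφ_nonneg : ∀ x, 0 ≤ φ x)
    {cφ τ M : ℝ} (hc : 0 < cφ) (hcC : cφ ≤ Cφ)
    (hub : ∀ x : ℝ, φ x ≤ Cφ) (hlb : ∀ x ∈ Set.Ioo (-τ) τ, cφ ≤ φ x)
    (hM : 0 < M) (hτ : M + 1 ≤ τ)
    {n : ℕ} (hn : 1 ≤ n) {σ θ₀ : ℝ} (hσ : 0 < σ) (hθ : |θ₀| ≤ M * σ)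
    (hbr : 1 / Real.sqrt n ≤ σ) (ε : ℝ) :
    postSecondMoment φ n σ θ₀ (θ₀ + ε / Real.sqrt n) ≤
      (384 * Cφ / cφ / n) * ((1 + ε ^ 2) * rexp (max (|ε| - 1/4) 0 ^ 2 / 2)) := by
  have hCφ : 0 ≤ Cφ := le_trans hc.le hcC
  have hn0 : (0:ℝ) < n := by exact_mod_cast hn
  set s := Real.sqrt n with hsdef
  have hs0 : 0 < s := Real.sqrt_pos.2 hn0
  have hsn : s ^ 2 = (n:ℝ) := Real.sq_sqrt (Nat.cast_nonneg n)
  have hrmin : min σ (1/s) = 1/s := min_eq_right hbr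
  have hquarter : s * (1/s) / 4 = 1/4 := by field_simp
  set E := rexp (max (|ε| - 1/4) 0 ^ 2 / 2) with hEdef
  have hE0 : 0 < E := Real.exp_pos _
  -- denominator lower bound
  have hD := denom_lb hφ_meas hφ_nonneg hub hc hlb hM hτ hn hσ hθ ε
  rw [hrmin, hquarter] at hD
  rw [exp_collapse (max (|ε| - 1/4) 0 ^ 2 / 2), ← hEdef] at hD
  have hD' : (cφ * (1/s/4) * rexp (-(1/8))) * E⁻¹
      ≤ ∫ θ : ℝ, rexp (-(n : ℝ) * (θ - (θ₀ + ε / s)) ^ 2 / 2) * φ (θ / σ) := by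
    calc (cφ * (1/s/4) * rexp (-(1/8))) * E⁻¹
        = cφ * (1/s/4) * (rexp (-(1/8)) * E⁻¹) := by ring
      _ ≤ _ := hD
  -- numerator upper bound
  have hN := numer_ub1 hφ_meas hφ_nonneg hub hCφ hn σ θ₀ (θ₀ + ε / s)
  have hxθ : (θ₀ + ε / s - θ₀) ^ 2 = ε ^ 2 / (n:ℝ) := by
    rw [add_sub_cancel_left, div_pow, hsn]
  rw [hxθ] at hN
  have h4 : Real.sqrt (4 * π / n) ≤ 4 / s := by
    have h41 : (4 * π / (n:ℝ)) ≤ (4/s) ^ 2 := by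
      rw [div_pow, hsn]
      have : (4:ℝ)^2 = 16 := by norm_num
      rw [this]
      gcongr
      nlinarith [Real.pi_le_four]
    calc Real.sqrt (4 * π / n) ≤ Real.sqrt ((4/s)^2) := Real.sqrt_le_sqrt h41
      _ = 4/s := Real.sqrt_sq (by positivity)
  have h5 : Real.sqrt (2 * π / n) ≤ 3 / s := by
    have h51 : (2 * π / (n:ℝ)) ≤ (3/s) ^ 2 := by
      rw [div_pow, hsn]
      have : (3:ℝ)^2 = 9 := by norm_num
      rw [this]
      gcongr
      nlinarith [Real.pi_le_four]
    calc Real.sqrt (2 * π / n) ≤ Real.sqrt ((3/s)^2) := Real.sqrt_le_sqrt h51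
      _ = 3/s := Real.sqrt_sq (by positivity)
  have hq0 : (0:ℝ) ≤ 32 * Cφ * (1 + ε ^ 2) / ((n:ℝ) * s) := by positivity
  have hN' : ∫ θ : ℝ, (θ - θ₀) ^ 2 * (rexp (-(n : ℝ) * (θ - (θ₀ + ε / s)) ^ 2 / 2) * φ (θ / σ))
      ≤ 32 * Cφ * (1 + ε ^ 2) / ((n:ℝ) * s) := by
    have hstep : (8 / (n:ℝ)) * Real.sqrt (4 * π / n) + 2 * (ε ^ 2 / (n:ℝ)) * Real.sqrt (2 * π / n)
        ≤ 32 * (1 + ε ^ 2) / ((n:ℝ) * s) := by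
      have e1 : (8 / (n:ℝ)) * (4/s) + 2 * (ε ^ 2 / (n:ℝ)) * (3/s) = (32 + 6 * ε ^ 2) / ((n:ℝ) * s) := by
        field_simp; ring
      have e2 : (8 / (n:ℝ)) * Real.sqrt (4 * π / n) + 2 * (ε ^ 2 / (n:ℝ)) * Real.sqrt (2 * π / n)
          ≤ (8 / (n:ℝ)) * (4/s) + 2 * (ε ^ 2 / (n:ℝ)) * (3/s) := by
        gcongr <;> positivity
      rw [e1] at e2
      have e3 : (32 + 6 * ε ^ 2) / ((n:ℝ) * s) ≤ 32 * (1 + ε ^ 2) / ((n:ℝ) * s) := by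
        gcongr
        nlinarith [sq_nonneg ε]
      linarith
    calc ∫ θ : ℝ, (θ - θ₀) ^ 2 * (rexp (-(n : ℝ) * (θ - (θ₀ + ε / s)) ^ 2 / 2) * φ (θ / σ))
        ≤ Cφ * ((8 / (n:ℝ)) * Real.sqrt (4 * π / n) + 2 * (ε ^ 2 / (n:ℝ)) * Real.sqrt (2 * π / n)) := hN
      _ ≤ Cφ * (32 * (1 + ε ^ 2) / ((n:ℝ) * s)) := mul_le_mul_of_nonneg_left hstep hCφ
      _ = 32 * Cφ * (1 + ε ^ 2) / ((n:ℝ) * s) := by ring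
  -- combine
  have hc0 : 0 < cφ * (1/s/4) * rexp (-(1/8)) := by positivity
  have hpost := ratio_helper hD' hc0 hE0 hN' hq0
  rw [postSecondMoment]
  refine le_trans hpost ?_
  -- final algebra
  have hexp3 : rexp ((1:ℝ)/8) ≤ 3 := exp_small_le_three (by norm_num)
  have hinv : (1:ℝ)/3 ≤ rexp (-(1/8)) := by
    rw [Real.exp_neg]
    have := inv_anti₀ (Real.exp_pos ((1:ℝ)/8)) hexp3
    simpa using this
  have elhs : 32 * Cφ * (1 + ε ^ 2) / ((n:ℝ) * s) * E / (cφ * (1/s/4) * rexp (-(1/8)))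
      = (128 / rexp (-(1/8))) * (Cφ * (1 + ε ^ 2) * E / (cφ * (n:ℝ))) := by
    field_simp
    ring
  have erhs : (384 * Cφ / cφ / n) * ((1 + ε ^ 2) * E)
      = 384 * (Cφ * (1 + ε ^ 2) * E / (cφ * (n:ℝ))) := by
    field_simp
  rw [elhs, erhs]
  apply mul_le_mul_of_nonneg_right _ (by positivity)
  rw [div_le_iff₀ (Real.exp_pos _)]
  nlinarith [Real.exp_pos (-(1/8):ℝ)]

lemma post_le_B (hφ_meas : Measurable φ) (hφ_nonneg : ∀ x, 0 ≤ φ x)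
    (hφ_prob : (∫ x : ℝ, φ x) = 1) (hφ_int : Integrable φ)
    {cφ τ M : ℝ} (hc : 0 < cφ) (hcC : cφ ≤ Cφ)
    (hub : ∀ x : ℝ, φ x ≤ Cφ) (hlb : ∀ x ∈ Set.Ioo (-τ) τ, cφ ≤ φ x)
    (hmom : Integrable (fun x : ℝ => x ^ 2 * φ x))
    (hM : 0 < M) (hτ : M + 1 ≤ τ)
    {n : ℕ} (hn : 1 ≤ n) {σ θ₀ : ℝ} (hσ : 0 < σ) (hθ : |θ₀| ≤ M * σ)
    (hbr : σ ≤ 1 / Real.sqrt n) (ε : ℝ) :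
    postSecondMoment φ n σ θ₀ (θ₀ + ε / Real.sqrt n) ≤
      (24 * ((∫ u : ℝ, u ^ 2 * φ u) + M ^ 2) / cφ) * σ ^ 2 *
        rexp (max (|ε| - Real.sqrt n * σ / 4) 0 ^ 2 / 2) := by
  have hn0 : (0:ℝ) < n := by exact_mod_cast hn
  set s := Real.sqrt n with hsdef
  have hs0 : 0 < s := Real.sqrt_pos.2 hn0
  have hrmin : min σ (1/s) = σ := min_eq_left hbr
  set m2 := ∫ u : ℝ, u ^ 2 * φ u with hm2def
  have hm2 : 0 ≤ m2 := integral_nonneg fun u => mul_nonneg (sq_nonneg _) (hφ_nonneg u)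
  set E := rexp (max (|ε| - s * σ / 4) 0 ^ 2 / 2) with hEdef
  have hE0 : 0 < E := Real.exp_pos _
  have hD := denom_lb hφ_meas hφ_nonneg hub hc hlb hM hτ hn hσ hθ ε
  rw [hrmin] at hD
  rw [exp_collapse (max (|ε| - s * σ / 4) 0 ^ 2 / 2), ← hEdef] at hD
  have hD' : (cφ * (σ/4) * rexp (-(1/8))) * E⁻¹
      ≤ ∫ θ : ℝ, rexp (-(n : ℝ) * (θ - (θ₀ + ε / s)) ^ 2 / 2) * φ (θ / σ) := by
    calc (cφ * (σ/4) * rexp (-(1/8))) * E⁻¹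
        = cφ * (σ/4) * (rexp (-(1/8)) * E⁻¹) := by ring
      _ ≤ _ := hD
  have hN := numer_ub2 hφ_meas hφ_nonneg hφ_prob hφ_int hub hmom hn hσ hθ (θ₀ + ε / s)
  rw [← hm2def] at hN
  have hq0 : (0:ℝ) ≤ 2 * σ ^ 3 * (m2 + M ^ 2) := by positivity
  have hc0 : 0 < cφ * (σ/4) * rexp (-(1/8)) := by positivity
  have hpost := ratio_helper hD' hc0 hE0 hN hq0
  rw [postSecondMoment]
  refine le_trans hpost ?_
  have hexp3 : rexp ((1:ℝ)/8) ≤ 3 := exp_small_le_three (by norm_num)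
  have hinv : (1:ℝ)/3 ≤ rexp (-(1/8)) := by
    rw [Real.exp_neg]
    have := inv_anti₀ (Real.exp_pos ((1:ℝ)/8)) hexp3
    simpa using this
  have elhs : 2 * σ ^ 3 * (m2 + M ^ 2) * E / (cφ * (σ/4) * rexp (-(1/8)))
      = (8 / rexp (-(1/8))) * (σ ^ 2 * (m2 + M ^ 2) * E / cφ) := by
    field_simp
    ring
  have erhs : (24 * (m2 + M ^ 2) / cφ) * σ ^ 2 * E
      = 24 * (σ ^ 2 * (m2 + M ^ 2) * E / cφ) := by
    field_simp
  rw [elhs, erhs]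
  apply mul_le_mul_of_nonneg_right _ (by positivity)
  rw [div_le_iff₀ (Real.exp_pos _)]
  nlinarith [Real.exp_pos (-(1/8):ℝ)]

lemma measurable_post (hφ_meas : Measurable φ) (n : ℕ) (σ θ₀ : ℝ) :
    Measurable fun x : ℝ => postSecondMoment φ n σ θ₀ x := by
  have hg : Measurable fun p : ℝ × ℝ => rexp (-(n:ℝ) * (p.2 - p.1) ^ 2 / 2) := by fun_prop
  have h1 : StronglyMeasurable fun p : ℝ × ℝ =>
      (p.2 - θ₀) ^ 2 * (rexp (-(n:ℝ) * (p.2 - p.1) ^ 2 / 2) * φ (p.2 / σ)) :=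
    (((measurable_snd.sub_const θ₀).pow_const 2).mul
      (hg.mul (hφ_meas.comp (measurable_snd.div_const σ)))).stronglyMeasurable
  have h2 : StronglyMeasurable fun p : ℝ × ℝ =>
      rexp (-(n:ℝ) * (p.2 - p.1) ^ 2 / 2) * φ (p.2 / σ) :=
    (hg.mul (hφ_meas.comp (measurable_snd.div_const σ))).stronglyMeasurable
  exact (h1.integral_prod_right').measurable.div (h2.integral_prod_right').measurable

lemma coord_bound (hφ_meas : Measurable φ) (hφ_nonneg : ∀ x, 0 ≤ φ x)
    (hφ_prob : (∫ x : ℝ, φ x) = 1) (hφ_int : Integrable φ)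
    {cφ τ M : ℝ} (hc : 0 < cφ) (hcC : cφ ≤ Cφ)
    (hub : ∀ x : ℝ, φ x ≤ Cφ) (hlb : ∀ x ∈ Set.Ioo (-τ) τ, cφ ≤ φ x)
    (hmom : Integrable (fun x : ℝ => x ^ 2 * φ x))
    (hM : 0 < M) (hτ : M + 1 ≤ τ)
    {n : ℕ} (hn : 1 ≤ n) {σ θ₀ : ℝ} (hσ : 0 < σ) (hθ : |θ₀| ≤ M * σ) :
    ∫⁻ x, ENNReal.ofReal (postSecondMoment φ n σ θ₀ (θ₀ + x / Real.sqrt n)) ∂(gaussianReal 0 1)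
      ≤ ENNReal.ofReal
        ((384 * Cφ / cφ * (19200 * π) + 864 * π * ((∫ u : ℝ, u ^ 2 * φ u) + M ^ 2) / cφ) / n) := by
  have hCφ : 0 ≤ Cφ := le_trans hc.le hcC
  have hn0 : (0:ℝ) < n := by exact_mod_cast hn
  set s := Real.sqrt n with hsdef
  have hs0 : 0 < s := Real.sqrt_pos.2 hn0
  have hsn : s ^ 2 = (n:ℝ) := Real.sq_sqrt (Nat.cast_nonneg n)
  set m2 := ∫ u : ℝ, u ^ 2 * φ u with hm2def
  have hm2 : 0 ≤ m2 := integral_nonneg fun u => mul_nonneg (sq_nonneg _) (hφ_nonneg u)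
  have hX : (0:ℝ) ≤ 384 * Cφ / cφ * (19200 * π) := by positivity
  have hY : (0:ℝ) ≤ 864 * π * (m2 + M ^ 2) / cφ := by positivity
  rcases le_total (1/s) σ with hbr | hbr
  · -- branch A
    have hcA : (0:ℝ) ≤ 384 * Cφ / cφ / n := by positivity
    have hmeasA : Measurable fun x : ℝ =>
        ENNReal.ofReal ((1 + x ^ 2) * rexp (max (|x| - 1/4) 0 ^ 2 / 2)) := by
      apply Measurable.ennreal_ofReal; fun_prop
    calc ∫⁻ x, ENNReal.ofReal (postSecondMoment φ n σ θ₀ (θ₀ + x / s)) ∂(gaussianReal 0 1)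
        ≤ ∫⁻ x, ENNReal.ofReal ((384 * Cφ / cφ / n) *
            ((1 + x ^ 2) * rexp (max (|x| - 1/4) 0 ^ 2 / 2))) ∂(gaussianReal 0 1) :=
          lintegral_mono fun x => ENNReal.ofReal_le_ofReal
            (post_le_A hφ_meas hφ_nonneg hc hcC hub hlb hM hτ hn hσ hθ hbr x)
      _ = ENNReal.ofReal (384 * Cφ / cφ / n) *
            ∫⁻ x, ENNReal.ofReal ((1 + x ^ 2) * rexp (max (|x| - 1/4) 0 ^ 2 / 2)) ∂(gaussianReal 0 1) := by
          simp_rw [ENNReal.ofReal_mul hcA]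
          rw [lintegral_const_mul _ hmeasA]
      _ ≤ ENNReal.ofReal (384 * Cφ / cφ / n) * ENNReal.ofReal (19200 * π) :=
          mul_le_mul_right gauss_A _
      _ = ENNReal.ofReal ((384 * Cφ / cφ / n) * (19200 * π)) := (ENNReal.ofReal_mul hcA).symm
      _ ≤ _ := by
          apply ENNReal.ofReal_le_ofReal
          rw [show (384 * Cφ / cφ / n) * (19200 * π) = (384 * Cφ / cφ * (19200 * π)) / n by ring]
          gcongr
          linarith
  · -- branch B
    set a := s * σ / 4 with hadef
    have ha0 : 0 < a := by positivity
    have haq : a ≤ 1/4 := by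
      have h1 : s * σ ≤ s * (1/s) := by nlinarith
      have h2 : s * (1/s) = 1 := by field_simp
      rw [hadef]; nlinarith
    have hcB : (0:ℝ) ≤ 24 * (m2 + M ^ 2) / cφ * σ ^ 2 := by positivity
    have hmeasB : Measurable fun x : ℝ =>
        ENNReal.ofReal (rexp (max (|x| - a) 0 ^ 2 / 2)) := by
      apply Measurable.ennreal_ofReal; fun_prop
    calc ∫⁻ x, ENNReal.ofReal (postSecondMoment φ n σ θ₀ (θ₀ + x / s)) ∂(gaussianReal 0 1)
        ≤ ∫⁻ x, ENNReal.ofReal ((24 * (m2 + M ^ 2) / cφ * σ ^ 2) *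
            rexp (max (|x| - a) 0 ^ 2 / 2)) ∂(gaussianReal 0 1) := by
          apply lintegral_mono fun x => ENNReal.ofReal_le_ofReal ?_
          have := post_le_B hφ_meas hφ_nonneg hφ_prob hφ_int hc hcC hub hlb hmom hM hτ hn hσ hθ hbr x
          rw [← hm2def] at this
          calc postSecondMoment φ n σ θ₀ (θ₀ + x / s)
              ≤ (24 * (m2 + M ^ 2) / cφ) * σ ^ 2 * rexp (max (|x| - s * σ / 4) 0 ^ 2 / 2) := this
            _ = (24 * (m2 + M ^ 2) / cφ * σ ^ 2) * rexp (max (|x| - a) 0 ^ 2 / 2) := by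
                rw [hadef]
      _ = ENNReal.ofReal (24 * (m2 + M ^ 2) / cφ * σ ^ 2) *
            ∫⁻ x, ENNReal.ofReal (rexp (max (|x| - a) 0 ^ 2 / 2)) ∂(gaussianReal 0 1) := by
          simp_rw [ENNReal.ofReal_mul hcB]
          rw [lintegral_const_mul _ hmeasB]
      _ ≤ ENNReal.ofReal (24 * (m2 + M ^ 2) / cφ * σ ^ 2) * ENNReal.ofReal (9 * π / a) :=
          mul_le_mul_right (gauss_B ha0 haq) _
      _ = ENNReal.ofReal ((24 * (m2 + M ^ 2) / cφ * σ ^ 2) * (9 * π / a)) :=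
          (ENNReal.ofReal_mul hcB).symm
      _ ≤ _ := by
          apply ENNReal.ofReal_le_ofReal
          have e1 : (24 * (m2 + M ^ 2) / cφ * σ ^ 2) * (9 * π / a)
              = (864 * π * (m2 + M ^ 2) / cφ) * (σ / s) := by
            rw [hadef]; field_simp; ring
          have e2 : σ / s ≤ 1 / (n:ℝ) := by
            calc σ / s ≤ (1/s) / s := by gcongr
              _ = 1 / (n:ℝ) := by rw [div_div, ← hsn]; ring_nf
          rw [e1]
          calc (864 * π * (m2 + M ^ 2) / cφ) * (σ / s)
              ≤ (864 * π * (m2 + M ^ 2) / cφ) * (1 / (n:ℝ)) := mul_le_mul_of_nonneg_left e2 hY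
            _ = (864 * π * (m2 + M ^ 2) / cφ) / n := by ring
            _ ≤ _ := by gcongr; linarith


end ContractionAux

open ContractionAux in
theorem contraction_H_delta {Ω : Type*} [MeasurableSpace Ω]
    (P : Measure Ω) [IsProbabilityMeasure P]
    (φ : ℝ → ℝ) (cφ Cφ τ M : ℝ)
    (hφ_meas : Measurable φ) (hφ_nonneg : ∀ x, 0 ≤ φ x)
    (hφ_prob : (∫ x : ℝ, φ x) = 1)
    (hc : 0 < cφ) (hcC : cφ ≤ Cφ)
    (hub : ∀ x : ℝ, φ x ≤ Cφ)
    (hlb : ∀ x ∈ Set.Ioo (-τ) τ, cφ ≤ φ x)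
    (hmom : Integrable (fun x : ℝ => x ^ 2 * φ x))
    (hM : 0 < M) (hτ : M + 1 ≤ τ)
    (σ : ℕ+ → ℝ) (hσpos : ∀ l, 0 < σ l)
    (hσsum : Summable (fun l : ℕ+ => (2 : ℝ) ^ (l : ℕ) * σ l ^ 2))
    (θ₀ : (l : ℕ+) → Fin (2 ^ (l : ℕ)) → ℝ)
    (hθ₀ : ∀ l k, |θ₀ l k| ≤ M * σ l)
    (ε : ((l : ℕ+) × Fin (2 ^ (l : ℕ))) → Ω → ℝ)
    (hεmeas : ∀ i, Measurable (ε i))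
    (hεlaw : ∀ i, Measure.map (ε i) P = gaussianReal 0 1)
    (hεindep : iIndepFun ε P)
    (δ : ℝ) (hδ : 1 / 2 < δ) :
    ∃ C : ℝ, ∀ n : ℕ, 1 ≤ n →
      (∫⁻ ω, ∑' (l : ℕ+) (k : Fin (2 ^ (l : ℕ))),
          ENNReal.ofReal ((2 : ℝ) ^ (-((l : ℕ) : ℝ)) * ((l : ℕ) : ℝ) ^ (-(2 * δ)) *
            postSecondMoment φ n (σ l) (θ₀ l k)
              (θ₀ l k + ε ⟨l, k⟩ ω / Real.sqrt n)) ∂P)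
        ≤ ENNReal.ofReal (C / n) := by
  have hφ_int : Integrable φ := integrable_phi hφ_prob
  set K : ℝ := 384 * Cφ / cφ * (19200 * π) +
      864 * π * ((∫ u : ℝ, u ^ 2 * φ u) + M ^ 2) / cφ with hKdef
  have hm2 : 0 ≤ ∫ u : ℝ, u ^ 2 * φ u :=
    integral_nonneg fun u => mul_nonneg (sq_nonneg _) (hφ_nonneg u)
  have hCφ0 : 0 ≤ Cφ := le_trans hc.le hcC
  have hK0 : 0 ≤ K := by positivity
  have hsum_nat : Summable (fun j : ℕ => (j : ℝ) ^ (-(2 * δ))) :=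
    Real.summable_nat_rpow.2 (by linarith)
  have hSsum : Summable (fun l : ℕ+ => ((l : ℕ) : ℝ) ^ (-(2 * δ))) :=
    hsum_nat.comp_injective (fun a b h => PNat.coe_injective h)
  set S : ℝ := ∑' l : ℕ+, ((l : ℕ) : ℝ) ^ (-(2 * δ)) with hSdef
  have hS0 : 0 ≤ S := tsum_nonneg fun l => Real.rpow_nonneg (by positivity) _
  refine ⟨S * K, fun n hn => ?_⟩
  have hn0 : (0 : ℝ) < n := by exact_mod_cast hn
  -- weights
  have hw : ∀ l : ℕ+, (0:ℝ) ≤ (2 : ℝ) ^ (-((l : ℕ) : ℝ)) * ((l : ℕ) : ℝ) ^ (-(2 * δ)) := by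
    intro l
    apply mul_nonneg (Real.rpow_nonneg (by norm_num) _) (Real.rpow_nonneg (by positivity) _)
  -- measurability of each term
  have hmeas_i : ∀ (l : ℕ+) (k : Fin (2 ^ (l : ℕ))),
      Measurable fun ω => ENNReal.ofReal ((2 : ℝ) ^ (-((l : ℕ) : ℝ)) * ((l : ℕ) : ℝ) ^ (-(2 * δ)) *
        postSecondMoment φ n (σ l) (θ₀ l k) (θ₀ l k + ε ⟨l, k⟩ ω / Real.sqrt n)) := by
    intro l k
    apply Measurable.ennreal_ofReal
    apply Measurable.const_mul
    exact (measurable_post hφ_meas n (σ l) (θ₀ l k)).comp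
      (measurable_const.add ((hεmeas ⟨l, k⟩).div_const _))
  -- per-index bound
  have per_index : ∀ (l : ℕ+) (k : Fin (2 ^ (l : ℕ))),
      (∫⁻ ω, ENNReal.ofReal ((2 : ℝ) ^ (-((l : ℕ) : ℝ)) * ((l : ℕ) : ℝ) ^ (-(2 * δ)) *
          postSecondMoment φ n (σ l) (θ₀ l k) (θ₀ l k + ε ⟨l, k⟩ ω / Real.sqrt n)) ∂P)
        ≤ ENNReal.ofReal ((2 : ℝ) ^ (-((l : ℕ) : ℝ)) * ((l : ℕ) : ℝ) ^ (-(2 * δ)))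
          * ENNReal.ofReal (K / n) := by
    intro l k
    have hpostmeas : Measurable fun x : ℝ => ENNReal.ofReal
        (postSecondMoment φ n (σ l) (θ₀ l k) (θ₀ l k + x / Real.sqrt n)) := by
      apply Measurable.ennreal_ofReal
      exact (measurable_post hφ_meas n (σ l) (θ₀ l k)).comp
        (measurable_const.add (measurable_id.div_const _))
    calc (∫⁻ ω, ENNReal.ofReal ((2 : ℝ) ^ (-((l : ℕ) : ℝ)) * ((l : ℕ) : ℝ) ^ (-(2 * δ)) *
            postSecondMoment φ n (σ l) (θ₀ l k) (θ₀ l k + ε ⟨l, k⟩ ω / Real.sqrt n)) ∂P)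
        = ENNReal.ofReal ((2 : ℝ) ^ (-((l : ℕ) : ℝ)) * ((l : ℕ) : ℝ) ^ (-(2 * δ))) *
            ∫⁻ ω, ENNReal.ofReal (postSecondMoment φ n (σ l) (θ₀ l k)
              (θ₀ l k + ε ⟨l, k⟩ ω / Real.sqrt n)) ∂P := by
          have hgm : Measurable fun ω : Ω => ENNReal.ofReal (postSecondMoment φ n (σ l)
              (θ₀ l k) (θ₀ l k + ε ⟨l, k⟩ ω / Real.sqrt n)) := hpostmeas.comp (hεmeas ⟨l, k⟩)
          simp_rw [ENNReal.ofReal_mul (hw l)]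
          rw [lintegral_const_mul _ hgm]
      _ ≤ _ := by
          apply mul_le_mul_right
          have hmap : (∫⁻ ω, ENNReal.ofReal (postSecondMoment φ n (σ l) (θ₀ l k)
              (θ₀ l k + ε ⟨l, k⟩ ω / Real.sqrt n)) ∂P)
              = ∫⁻ x, ENNReal.ofReal (postSecondMoment φ n (σ l) (θ₀ l k)
                (θ₀ l k + x / Real.sqrt n)) ∂(gaussianReal 0 1) := by
            rw [← hεlaw ⟨l, k⟩, lintegral_map hpostmeas (hεmeas ⟨l, k⟩)]
          rw [hmap]
          exact coord_bound hφ_meas hφ_nonneg hφ_prob hφ_int hc hcC hub hlb hmom hM hτ hn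
            (hσpos l) (hθ₀ l k)
  -- interchange integral and sums
  rw [lintegral_tsum (fun l => (Measurable.ennreal_tsum fun k => hmeas_i l k).aemeasurable)]
  have step2 : ∀ l : ℕ+,
      (∫⁻ ω, ∑' (k : Fin (2 ^ (l : ℕ))),
          ENNReal.ofReal ((2 : ℝ) ^ (-((l : ℕ) : ℝ)) * ((l : ℕ) : ℝ) ^ (-(2 * δ)) *
            postSecondMoment φ n (σ l) (θ₀ l k)
              (θ₀ l k + ε ⟨l, k⟩ ω / Real.sqrt n)) ∂P)
        ≤ ENNReal.ofReal (((l : ℕ) : ℝ) ^ (-(2 * δ)) * (K / n)) := by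
    intro l
    rw [lintegral_tsum (fun k => (hmeas_i l k).aemeasurable)]
    calc (∑' (k : Fin (2 ^ (l : ℕ))), ∫⁻ ω,
            ENNReal.ofReal ((2 : ℝ) ^ (-((l : ℕ) : ℝ)) * ((l : ℕ) : ℝ) ^ (-(2 * δ)) *
              postSecondMoment φ n (σ l) (θ₀ l k)
                (θ₀ l k + ε ⟨l, k⟩ ω / Real.sqrt n)) ∂P)
        ≤ ∑' (_k : Fin (2 ^ (l : ℕ))),
            ENNReal.ofReal ((2 : ℝ) ^ (-((l : ℕ) : ℝ)) * ((l : ℕ) : ℝ) ^ (-(2 * δ)))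
              * ENNReal.ofReal (K / n) :=
          ENNReal.tsum_le_tsum fun k => per_index l k
      _ = (2 ^ (l : ℕ) : ℕ) • (ENNReal.ofReal ((2 : ℝ) ^ (-((l : ℕ) : ℝ)) *
            ((l : ℕ) : ℝ) ^ (-(2 * δ))) * ENNReal.ofReal (K / n)) := by
          rw [tsum_fintype]
          simp [Finset.sum_const, Finset.card_univ]
      _ = ENNReal.ofReal ((2 : ℝ) ^ ((l : ℕ) : ℕ) * ((2 : ℝ) ^ (-((l : ℕ) : ℝ)) *
            ((l : ℕ) : ℝ) ^ (-(2 * δ)) * (K / n))) := by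
          rw [nsmul_eq_mul]
          rw [← ENNReal.ofReal_mul (hw l), ← ENNReal.ofReal_natCast,
            ← ENNReal.ofReal_mul (by positivity)]
          congr 1
          push_cast
          ring
      _ = ENNReal.ofReal (((l : ℕ) : ℝ) ^ (-(2 * δ)) * (K / n)) := by
          congr 1
          have h2l : (2 : ℝ) ^ (-((l : ℕ) : ℝ)) = ((2 : ℝ) ^ ((l : ℕ) : ℕ))⁻¹ := by
            rw [← Real.rpow_natCast 2 (l : ℕ), ← Real.rpow_neg (by norm_num)]
          rw [h2l]
          have : ((2 : ℝ) ^ ((l : ℕ) : ℕ)) ≠ 0 := by positivity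
          field_simp
  calc (∑' l : ℕ+, ∫⁻ ω, ∑' (k : Fin (2 ^ (l : ℕ))),
          ENNReal.ofReal ((2 : ℝ) ^ (-((l : ℕ) : ℝ)) * ((l : ℕ) : ℝ) ^ (-(2 * δ)) *
            postSecondMoment φ n (σ l) (θ₀ l k)
              (θ₀ l k + ε ⟨l, k⟩ ω / Real.sqrt n)) ∂P)
      ≤ ∑' l : ℕ+, ENNReal.ofReal (((l : ℕ) : ℝ) ^ (-(2 * δ)) * (K / n)) :=
        ENNReal.tsum_le_tsum step2
    _ = ENNReal.ofReal (∑' l : ℕ+, ((l : ℕ) : ℝ) ^ (-(2 * δ)) * (K / n)) := by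
        rw [ENNReal.ofReal_tsum_of_nonneg
          (fun l => mul_nonneg (Real.rpow_nonneg (by positivity) _) (by positivity))
          (hSsum.mul_right _)]
    _ = ENNReal.ofReal (S * K / n) := by
        rw [tsum_mul_right, ← hSdef]
        congr 1
        ring
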